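/- Let K be a field, m ≥ 1, and let A be the adjacency matrix of the cycle graph on 2m+1 vertices (A_{ij} = 1 if vertices i and j are adjacent on the cycle, 0 otherwise). Then for every nonzero q ∈ K: det((q + q⁻¹)·I − A) = q^{−(2m+1)}·(q^{2m+1} − 1)². -/

import Mathlib

open Matrix Finset

lemma fin_add_one_val {n : ℕ} (hn : 1 ≤ n) (i : Fin (n+1)) :
    ((i + 1 : Fin (n+1))).val = if i.val = n then 0 else i.val + 1 := by
  have h1 : ((1 : Fin (n+1))).val = 1 := by
    simp [Fin.val_one', Nat.mod_eq_of_lt]; omega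
  rw [Fin.val_add, h1]
  rcases eq_or_ne i.val n with h | h
  · simp [h]
  · have : i.val < n := by have := i.2; omega
    rw [if_neg h, Nat.mod_eq_of_lt (by omega)]

lemma det_cycle_aux {K : Type*} [Field K] (n : ℕ) (hn : 1 ≤ n) (q : K) :
    (Matrix.of fun i j : Fin (n+1) =>
      (if i = j then q else 0) - (if j = i + 1 then (1:K) else 0)).det
      = q ^ (n+1) - 1 := by
  set M : Matrix (Fin (n+1)) (Fin (n+1)) K := Matrix.of fun i j =>
      (if i = j then q else 0) - (if j = i + 1 then (1:K) else 0) with hM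
  have cond2 : ∀ i j : Fin (n+1), (j = i + 1) ↔
      ((j:ℕ) = if (i:ℕ) = n then 0 else (i:ℕ)+1) := by
    intro i j; rw [Fin.ext_iff, fin_add_one_val hn]
  have entry : ∀ i j : Fin (n+1), M i j =
      (if (i:ℕ) = (j:ℕ) then q else 0) -
      (if ((j:ℕ) = if (i:ℕ) = n then 0 else (i:ℕ)+1) then (1:K) else 0) := by
    intro i j
    show (if i = j then q else 0) - (if j = i + 1 then (1:K) else 0) = _
    simp only [cond2]
    simp only [Fin.ext_iff]
  rw [Matrix.det_succ_column_zero]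
  have h0last : (0 : Fin (n+1)) ≠ Fin.last n := by
    simp [Fin.ext_iff]; omega
  rw [← Finset.sum_subset (Finset.subset_univ {0, Fin.last n}) ?_]
  · rw [Finset.sum_pair h0last]
    -- minor at 0 : upper triangular
    have hm0 : (M.submatrix (Fin.succAbove 0) Fin.succ).det = q ^ n := by
      rw [Matrix.det_of_upperTriangular]
      · rw [Finset.prod_congr rfl (g := fun _ => q) fun a _ => ?_]
        · rw [Finset.prod_const, Finset.card_univ, Fintype.card_fin]
        · have ha : (a:ℕ) < n := a.2
          simp only [Matrix.submatrix_apply, Fin.succAbove_zero, entry, Fin.val_succ]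
          rw [if_pos trivial,
            if_neg (show ¬((a:ℕ)+1 = if (a:ℕ)+1 = n then 0 else (a:ℕ)+1+1) by
              split <;> omega), sub_zero]
      · intro i j hij
        have hij' : (j:ℕ) < (i:ℕ) := hij
        have hi : (i:ℕ) < n := i.2
        simp only [Matrix.submatrix_apply, Fin.succAbove_zero, entry, Fin.val_succ]
        rw [if_neg (by omega), if_neg (by split <;> omega), sub_zero]
    -- minor at last : lower triangular
    have hml : (M.submatrix (Fin.succAbove (Fin.last n)) Fin.succ).det = (-1:K) ^ n := by
      rw [Matrix.det_of_lowerTriangular]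
      · rw [Finset.prod_congr rfl (g := fun _ => (-1:K)) fun a _ => ?_]
        · rw [Finset.prod_const, Finset.card_univ, Fintype.card_fin]
        · have ha : (a:ℕ) < n := a.2
          simp only [Matrix.submatrix_apply, Fin.succAbove_last, entry, Fin.val_succ,
            Fin.coe_castSucc]
          rw [if_neg (show ¬((a:ℕ) = (a:ℕ)+1) by omega),
            if_pos (show (a:ℕ)+1 = if (a:ℕ) = n then 0 else (a:ℕ)+1 by
              rw [if_neg (by omega)]), zero_sub]
      · intro i j hij
        have hij' : (i:ℕ) < (j:ℕ) := hij
        have hi : (i:ℕ) < n := i.2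
        simp only [Matrix.submatrix_apply, Fin.succAbove_last, entry, Fin.val_succ,
          Fin.coe_castSucc]
        rw [if_neg (by omega), if_neg (by rw [if_neg (by omega)]; omega), sub_zero]
    have h00 : M 0 0 = q := by
      rw [entry]; rw [Fin.val_zero]
      rw [if_pos rfl,
        if_neg (show ¬((0:ℕ) = if (0:ℕ) = n then 0 else 0+1) by split <;> omega), sub_zero]
    have hl0 : M (Fin.last n) 0 = -1 := by
      rw [entry]; rw [Fin.val_zero, Fin.val_last]
      rw [if_neg (show ¬(n = (0:ℕ)) by omega),
        if_pos (show (0:ℕ) = if n = n then 0 else n+1 by simp), zero_sub]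
    rw [hm0, hml, h00, hl0]
    simp only [Fin.val_zero, Fin.val_last, pow_zero, one_mul]
    have hsq : (-1:K) ^ n * (-1:K) ^ n = 1 := by
      rw [← pow_add]; exact Even.neg_one_pow ⟨n, rfl⟩
    linear_combination (-1 : K) * hsq
  · intro i _ hi
    simp only [Finset.mem_insert, Finset.mem_singleton, not_or] at hi
    have hi1 : (i:ℕ) ≠ 0 := fun h => hi.1 (Fin.ext (by simpa using h))
    have hi2 : (i:ℕ) ≠ n := fun h => hi.2 (Fin.ext (by simpa using h))
    have h1 : M i 0 = 0 := by
      rw [entry]; rw [Fin.val_zero]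
      rw [if_neg (by omega), if_neg (by split <;> omega), sub_zero]
    rw [h1, mul_zero, zero_mul]

/-- Evaluation of the characteristic polynomial of the odd cycle graph `Ã_{2m}`
(on `2m + 1` vertices) at `z = q + q⁻¹`:
`det ((q + q⁻¹) • I - A) = q^{-(2m+1)} · (q^{2m+1} - 1)²`. -/
theorem cycle_charpoly_eval {K : Type*} [Field K] (m : ℕ) (hm : 1 ≤ m)
    (A : Matrix (Fin (2 * m + 1)) (Fin (2 * m + 1)) K)
    (hA : ∀ i j, A i j =
      if (i.val + 1) % (2 * m + 1) = j.val ∨ (j.val + 1) % (2 * m + 1) = i.val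
      then 1 else 0)
    (q : K) (hq : q ≠ 0) :
    ((q + q⁻¹) • (1 : Matrix (Fin (2 * m + 1)) (Fin (2 * m + 1)) K) - A).det
      = (q⁻¹) ^ (2 * m + 1) * (q ^ (2 * m + 1) - 1) ^ 2 := by
  have h2m : 1 ≤ 2 * m := by omega
  set P : Matrix (Fin (2*m+1)) (Fin (2*m+1)) K :=
    Matrix.of fun i j => if j = i + 1 then (1:K) else 0 with hP
  have cond : ∀ i j : Fin (2*m+1), ((i.val + 1) % (2*m+1) = j.val) ↔ j = i + 1 := by
    intro i j
    rw [Fin.ext_iff, fin_add_one_val h2m]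
    have hi := i.2
    rcases eq_or_ne (i:ℕ) (2*m) with h | h
    · rw [h, if_pos rfl, Nat.mod_self]
      omega
    · rw [if_neg h, Nat.mod_eq_of_lt (by omega)]; omega
  have hnotboth : ∀ i j : Fin (2*m+1), j = i + 1 → i = j + 1 → False := by
    intro i j h1 h2
    rw [h1] at h2
    have h3 := congrArg Fin.val h2
    rw [fin_add_one_val h2m, fin_add_one_val h2m] at h3
    have hi := i.2
    split_ifs at h3 <;> omega
  have hPA : A = P + Pᵀ := by
    ext i j
    rw [hA, Matrix.add_apply, Matrix.transpose_apply]
    show _ = (if j = i + 1 then (1:K) else 0) + (if i = j + 1 then (1:K) else 0)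
    simp only [cond]
    by_cases h1 : j = i + 1
    · rw [if_pos (Or.inl h1), if_pos h1,
        if_neg (fun h2 => hnotboth i j h1 h2), add_zero]
    · by_cases h2 : i = j + 1
      · rw [if_pos (Or.inr h2), if_neg h1, if_pos h2, zero_add]
      · rw [if_neg (by tauto), if_neg h1, if_neg h2, add_zero]
  have hPPt : P * Pᵀ = (1 : Matrix (Fin (2*m+1)) (Fin (2*m+1)) K) := by
    ext i j
    rw [Matrix.mul_apply, Matrix.one_apply]
    simp only [hP, Matrix.of_apply, Matrix.transpose_apply, ite_mul, one_mul, zero_mul]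
    rw [Finset.sum_ite_eq' Finset.univ (i+1) (fun k => if k = j + 1 then (1:K) else 0)]
    simp only [Finset.mem_univ, if_true]
    by_cases h : i = j
    · rw [if_pos (by rw [h]), if_pos h]
    · rw [if_neg (fun hh => h (add_right_cancel hh)), if_neg h]
  have key : (q + q⁻¹) • (1 : Matrix (Fin (2*m+1)) (Fin (2*m+1)) K) - A
      = (q • 1 - P) * (1 - q⁻¹ • Pᵀ) := by
    rw [hPA, Matrix.mul_sub, Matrix.mul_one, Matrix.mul_smul, Matrix.sub_mul,
      Matrix.smul_mul, Matrix.one_mul, hPPt, smul_sub, smul_smul,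
      inv_mul_cancel₀ hq, one_smul, add_smul]
    abel
  have hdet1 : (q • (1:Matrix (Fin (2*m+1)) (Fin (2*m+1)) K) - P).det = q^(2*m+1) - 1 := by
    rw [show q • (1:Matrix (Fin (2*m+1)) (Fin (2*m+1)) K) - P
        = Matrix.of (fun i j : Fin (2*m+1) =>
          (if i = j then q else 0) - (if j = i + 1 then (1:K) else 0)) from ?_]
    · exact det_cycle_aux (2*m) h2m q
    · ext i j
      simp only [Matrix.sub_apply, Matrix.smul_apply, Matrix.one_apply,
        Matrix.of_apply, smul_eq_mul, mul_ite, mul_one, mul_zero]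
      rfl
  have hT : (1 : Matrix (Fin (2*m+1)) (Fin (2*m+1)) K) - q⁻¹ • Pᵀ
      = (q⁻¹ • (q • (1:Matrix (Fin (2*m+1)) (Fin (2*m+1)) K) - P))ᵀ := by
    rw [Matrix.transpose_smul, Matrix.transpose_sub, Matrix.transpose_smul,
      Matrix.transpose_one, smul_sub, smul_smul, inv_mul_cancel₀ hq, one_smul]
  have hdet2 : ((1 : Matrix (Fin (2*m+1)) (Fin (2*m+1)) K) - q⁻¹ • Pᵀ).det
      = (q⁻¹)^(2*m+1) * (q^(2*m+1) - 1) := by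
    rw [hT, Matrix.det_transpose, Matrix.det_smul, hdet1, Fintype.card_fin]
  rw [key, Matrix.det_mul, hdet1, hdet2]
  ring
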